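/- The map f : ℂ × {z : Re(z) < 0} → ℍ × ℂ, f(z₁,z₂) = (−iz₂, iz₁), where ℍ = {τ : Im(τ) > 0}, is a biholomorphism, and it pulls back the Kähler–Berndt metric g_{KB} = ½g_{1,1} on ℍ × ℂ to the metric on ℂ × iℍ whose matrix in coordinates (θ₁,θ₂,θ̇₁,θ̇₂) (with z₁ = θ₁ + iθ̇₁, z₂ = θ₂ + iθ̇₂) is block-diagonal diag(h_F(θ), h_F(θ)), where h_F(θ) is the 2×2 matrix with entries h₁₁ = −1/(2θ₂), h₁₂ = θ₁/(2θ₂²), h₂₂ = (θ₂ − θ₁²)/(2θ₂³). -/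

import Mathlib

open Complex

/-- The map `f(z₁,z₂) = (−iz₂, iz₁)` from `ℂ × iℍ` to `ℍ × ℂ`. -/
noncomputable def fSJ (p : ℂ × ℂ) : ℂ × ℂ := (-I * p.2, I * p.1)

/-- The Kähler–Berndt metric `g_KB = ½ g_{1,1}` on `ℍ × ℂ`, as a bilinear form
on `ℝ⁴` at the point with real coordinates `(u,v,x,y)` (`τ = u+iv`, `z = x+iy`):
`g_uu = g_vv = (v+y²)/v³`, `g_xx = g_yy = 1/v`, `g_ux = g_vy = −y/v²`,
all multiplied by `½`. -/
noncomputable def gKB (u v x y : ℝ) (P Q : Fin 4 → ℝ) : ℝ :=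
  (1 / 2) * (((v + y ^ 2) / v ^ 3) * (P 0 * Q 0 + P 1 * Q 1)
    + (1 / v) * (P 2 * Q 2 + P 3 * Q 3)
    + (-y / v ^ 2) * (P 0 * Q 2 + P 2 * Q 0 + P 1 * Q 3 + P 3 * Q 1))

/-- The block-diagonal metric `diag(h_F(θ), h_F(θ))` on `ℂ × iℍ` in the
coordinates `(θ₁,θ₂,θ̇₁,θ̇₂)`, with `h₁₁ = −1/(2θ₂)`, `h₁₂ = θ₁/(2θ₂²)`,
`h₂₂ = (θ₂−θ₁²)/(2θ₂³)`. -/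
noncomputable def gdiag (θ₁ θ₂ : ℝ) (P Q : Fin 4 → ℝ) : ℝ :=
  (-1 / (2 * θ₂)) * (P 0 * Q 0 + P 2 * Q 2)
  + (θ₁ / (2 * θ₂ ^ 2)) * (P 0 * Q 1 + P 1 * Q 0 + P 2 * Q 3 + P 3 * Q 2)
  + ((θ₂ - θ₁ ^ 2) / (2 * θ₂ ^ 3)) * (P 1 * Q 1 + P 3 * Q 3)

/-- The (linear) map `f` written in the real coordinates
`(θ₁,θ₂,θ̇₁,θ̇₂) ↦ (u,v,x,y) = (θ̇₂, −θ₂, −θ̇₁, θ₁)`; it is its own derivative. -/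
def dfSJ (P : Fin 4 → ℝ) : Fin 4 → ℝ := ![P 3, -(P 1), -(P 2), P 0]

/-- `f(z₁,z₂) = (−iz₂, iz₁)` is a biholomorphism from
`ℂ × iℍ` onto `ℍ × ℂ`, and it pulls back the Kähler–Berndt metric `½ g_{1,1}`
to the block-diagonal metric `diag(h_F, h_F)`. -/
theorem stmt14 :
    Differentiable ℂ fSJ ∧
    Set.BijOn fSJ (Set.univ ×ˢ {z : ℂ | z.re < 0}) ({τ : ℂ | 0 < τ.im} ×ˢ Set.univ) ∧
    ∀ θ₁ θ₂ t₁ t₂ : ℝ, θ₂ < 0 → ∀ P Q : Fin 4 → ℝ,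
      gKB t₂ (-θ₂) (-t₁) θ₁ (dfSJ P) (dfSJ Q) = gdiag θ₁ θ₂ P Q := by
  refine ⟨?_, ⟨?_, ?_, ?_⟩, ?_⟩
  · exact Differentiable.prodMk (differentiable_const _ |>.mul differentiable_snd)
      (differentiable_const _ |>.mul differentiable_fst)
  · rintro ⟨z₁, z₂⟩ ⟨-, hz⟩
    refine ⟨?_, trivial⟩
    simp only [Set.mem_setOf_eq] at hz ⊢
    simp [fSJ]
    linarith
  · rintro ⟨z₁, z₂⟩ ⟨-, h₂⟩ ⟨w₁, w₂⟩ ⟨-, g₂⟩ h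
    simp only [fSJ, Prod.mk.injEq] at h
    have h1 : z₂ = w₂ := by
      have := h.1
      field_simp at this
      exact neg_inj.mp this
    have h2 : z₁ = w₁ := by
      have := h.2
      field_simp at this
      exact this
    exact Prod.ext h2 h1
  · rintro ⟨w₁, w₂⟩ ⟨hw, -⟩
    refine ⟨(-I * w₂, I * w₁), ⟨trivial, ?_⟩, ?_⟩
    · simp only [Set.mem_setOf_eq] at hw ⊢
      simp
      linarith
    · simp [fSJ]; constructor <;> ring_nf <;> simp [Complex.I_sq] <;> ring
  · intro θ₁ θ₂ t₁ t₂ hθ P Q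
    have h : θ₂ ≠ 0 := ne_of_lt hθ
    simp only [gKB, gdiag, dfSJ]
    simp [Matrix.cons_val_zero, Matrix.cons_val_one]
    have h3 : θ₂ ^ 3 ≠ 0 := pow_ne_zero _ h
    field_simp [h]
    ring
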